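/- Let S be a nonempty set, s₀ ∈ S, and let K, K' : S × S → ℂ be conditionally positive definite kernels such that K(s,s) = K'(s,s) = 0 and K(s,s₀), K'(s,s₀) are real for all s ∈ S. Let F be a complex Hilbert space and V : S → F a map such that ⟨V(s), V(t)⟩ = (1/2)(K(s,t) − K(s,s₀) − K(s₀,t) + K(s₀,s₀)) for all s,t ∈ S and the linear span of V(S) is dense in F. Then K − K' is conditionally positive definite if and only if there exists a positive contraction C ∈ B(F) (C ≥ 0 and ‖C‖ ≤ 1) such that K'(s,t) = 2⟨C V(s), C V(t)⟩ − ⟨C V(s), C V(s)⟩ − ⟨C V(t), C V(t)⟩ for all s,t ∈ S. -/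

import Mathlib

open scoped ComplexOrder

/-- A scalar kernel `K` is conditionally positive definite if it is hermitian and for every
`n ≥ 2`, all `s₁, …, sₙ ∈ S` and all `c₁, …, cₙ ∈ ℂ` with `∑ᵢ cᵢ = 0`, the number
`∑ᵢⱼ conj(cᵢ) cⱼ K(sᵢ, sⱼ)` is real and nonnegative (here expressed via the order on `ℂ`). -/
def IsCondPosDefKernelC {S : Type*} (K : S → S → ℂ) : Prop :=
  ∀ (n : ℕ), 2 ≤ n → ∀ (s : Fin n → S) (c : Fin n → ℂ), (∑ i, c i) = 0 →
    0 ≤ ∑ i, ∑ j, (starRingEnd ℂ) (c i) * c j * K (s i) (s j)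

namespace CPDAux

open ComplexConjugate

variable {S : Type*}

/-- The sesquilinear pairing attached to a kernel. -/
noncomputable def Pform (L : S → S → ℂ) (d e : S →₀ ℂ) : ℂ :=
  ∑ s ∈ d.support, ∑ t ∈ e.support, conj (d s) * e t * L s t

lemma Pform_eq_lc (L : S → S → ℂ) (d e : S →₀ ℂ) :
    Pform L d e
      = Finsupp.linearCombination ℂ (fun t => ∑ s ∈ d.support, conj (d s) * L s t) e := by
  rw [Finsupp.linearCombination_apply, Finsupp.sum, Pform, Finset.sum_comm]
  refine Finset.sum_congr rfl fun t _ => ?_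
  rw [smul_eq_mul, Finset.mul_sum]
  exact Finset.sum_congr rfl fun s _ => by ring

lemma Pform_add_right (L : S → S → ℂ) (d e₁ e₂ : S →₀ ℂ) :
    Pform L d (e₁ + e₂) = Pform L d e₁ + Pform L d e₂ := by
  simp [Pform_eq_lc]

lemma Pform_smul_right (L : S → S → ℂ) (a : ℂ) (d e : S →₀ ℂ) :
    Pform L d (a • e) = a * Pform L d e := by
  simp [Pform_eq_lc]

lemma Pform_conj (L : S → S → ℂ) (hL : ∀ s t, L t s = conj (L s t)) (d e : S →₀ ℂ) :
    Pform L e d = conj (Pform L d e) := by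
  rw [Pform, Pform, map_sum, Finset.sum_comm]
  refine Finset.sum_congr rfl fun t _ => ?_
  rw [map_sum]
  refine Finset.sum_congr rfl fun s _ => ?_
  rw [map_mul, map_mul, hL s t, Complex.conj_conj, Complex.conj_conj]
  ring

lemma Pform_add_left (L : S → S → ℂ) (hL : ∀ s t, L t s = conj (L s t)) (d₁ d₂ e : S →₀ ℂ) :
    Pform L (d₁ + d₂) e = Pform L d₁ e + Pform L d₂ e := by
  rw [Pform_conj L hL, Pform_add_right, map_add, ← Pform_conj L hL, ← Pform_conj L hL]

lemma Pform_smul_left (L : S → S → ℂ) (hL : ∀ s t, L t s = conj (L s t)) (a : ℂ)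
    (d e : S →₀ ℂ) : Pform L (a • d) e = conj a * Pform L d e := by
  rw [Pform_conj L hL, Pform_smul_right, map_mul, ← Pform_conj L hL]

lemma Pform_single (L : S → S → ℂ) (s t : S) :
    Pform L (Finsupp.single s 1) (Finsupp.single t 1) = L s t := by
  simp [Pform, Finsupp.support_single_ne_zero _ one_ne_zero]

lemma bridge (K₀ : S → S → ℂ) (s₀ : S) (h00 : K₀ s₀ s₀ = 0)
    (hcpd : IsCondPosDefKernelC K₀) (c : S →₀ ℂ) :
    0 ≤ ∑ s ∈ c.support, ∑ t ∈ c.support,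
        conj (c s) * c t * (K₀ s t - K₀ s s₀ - K₀ s₀ t) := by
  classical
  set A := c.support with hA
  rcases Nat.eq_zero_or_pos A.card with hm | hm
  · rw [Finset.card_eq_zero] at hm
    simp [hm]
  · set m := A.card with hmdef
    set σ : Fin m ≃ A := A.equivFin.symm with hσ
    set D : Fin m → ℂ := fun i => c (σ i) with hD
    set Sm : Fin m → S := fun i => (σ i : S) with hSm
    set P := ∑ i, ∑ j, conj (D i) * D j * K₀ (Sm i) (Sm j) with hP
    set Q := ∑ i, conj (D i) * K₀ (Sm i) s₀ with hQ
    set R := ∑ j, D j * K₀ s₀ (Sm j) with hR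
    set T := ∑ i, D i with hT
    have e1 : ∀ f : S → ℂ, ∑ x ∈ A, f x = ∑ i : Fin m, f (Sm i) := by
      intro f
      rw [← Finset.sum_coe_sort A f, ← Equiv.sum_comp σ (fun a => f (a : S))]
    set sf : Fin (m+1) → S := Fin.snoc Sm s₀ with hsf
    set cf : Fin (m+1) → ℂ := Fin.snoc D (-T) with hcf
    have hcfc : ∀ i : Fin m, cf i.castSucc = D i := by
      intro i; simp [hcf]
    have hsfc : ∀ i : Fin m, sf i.castSucc = Sm i := by
      intro i; simp [hsf]
    have hcfl : cf (Fin.last m) = -T := by simp [hcf]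
    have hsfl : sf (Fin.last m) = s₀ := by simp [hsf]
    have hsumc : (∑ i, cf i) = 0 := by
      rw [Fin.sum_univ_castSucc]
      simp [hcfc, hcfl, hT]
    have key := hcpd (m+1) (by omega) sf cf hsumc
    have hinner : ∀ i : Fin m,
        (∑ j : Fin (m+1), conj (cf i.castSucc) * cf j * K₀ (sf i.castSucc) (sf j))
        = (∑ j : Fin m, conj (D i) * D j * K₀ (Sm i) (Sm j))
          + conj (D i) * (-T) * K₀ (Sm i) s₀ := by
      intro i
      rw [Fin.sum_univ_castSucc]
      simp only [hcfc, hcfl, hsfc, hsfl]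
    have hlastrow :
        (∑ j : Fin (m+1), conj (cf (Fin.last m)) * cf j * K₀ (sf (Fin.last m)) (sf j))
        = ∑ j : Fin m, conj (-T) * D j * K₀ s₀ (Sm j) := by
      rw [Fin.sum_univ_castSucc]
      simp only [hcfc, hcfl, hsfc, hsfl, h00, mul_zero, add_zero]
    have h2 : (∑ i : Fin m, conj (D i) * (-T) * K₀ (Sm i) s₀) = -(Q * T) := by
      have hh := Finset.sum_neg_distrib (s := (Finset.univ : Finset (Fin m)))
        (f := fun i => conj (D i) * K₀ (Sm i) s₀ * T)
      rw [hQ, Finset.sum_mul, ← hh]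
      exact Finset.sum_congr rfl fun i _ => by ring
    have h3 : (∑ j : Fin m, conj (-T) * D j * K₀ s₀ (Sm j)) = -(conj T * R) := by
      have hh := Finset.sum_neg_distrib (s := (Finset.univ : Finset (Fin m)))
        (f := fun j => conj T * (D j * K₀ s₀ (Sm j)))
      rw [hR, Finset.mul_sum, ← hh]
      refine Finset.sum_congr rfl fun j _ => ?_
      rw [map_neg]; ring
    have hexp : (∑ i, ∑ j, conj (cf i) * cf j * K₀ (sf i) (sf j))
        = P - Q * T - conj T * R := by
      rw [Fin.sum_univ_castSucc]
      rw [Finset.sum_congr rfl (fun i _ => hinner i), hlastrow,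
        Finset.sum_add_distrib, h2, h3]
      ring
    have split : ∀ i : Fin m,
        (∑ j, conj (D i) * D j * (K₀ (Sm i) (Sm j) - K₀ (Sm i) s₀ - K₀ s₀ (Sm j)))
        = (∑ j, conj (D i) * D j * K₀ (Sm i) (Sm j))
          - conj (D i) * K₀ (Sm i) s₀ * T - conj (D i) * R := by
      intro i
      rw [hT, hR]
      simp only [Finset.mul_sum, ← Finset.sum_sub_distrib]
      exact Finset.sum_congr rfl fun j _ => by ring
    have hQT : (∑ i : Fin m, conj (D i) * K₀ (Sm i) s₀ * T) = Q * T := by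
      rw [hQ, Finset.sum_mul]
    have hTR : (∑ i : Fin m, conj (D i) * R) = conj T * R := by
      rw [hT, map_sum, Finset.sum_mul]
    have htarget : (∑ s ∈ A, ∑ t ∈ A,
          conj (c s) * c t * (K₀ s t - K₀ s s₀ - K₀ s₀ t))
        = P - Q * T - conj T * R := by
      rw [e1]
      have hconv : ∀ i : Fin m,
          (∑ t ∈ A, conj (c (Sm i)) * c t * (K₀ (Sm i) t - K₀ (Sm i) s₀ - K₀ s₀ t))
          = ∑ j : Fin m, conj (D i) * D j
              * (K₀ (Sm i) (Sm j) - K₀ (Sm i) s₀ - K₀ s₀ (Sm j)) := by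
        intro i
        rw [e1 (fun t => conj (c (Sm i)) * c t * (K₀ (Sm i) t - K₀ (Sm i) s₀ - K₀ s₀ t))]
      rw [Finset.sum_congr rfl (fun i _ => hconv i),
        Finset.sum_congr rfl (fun i _ => split i)]
      simp only [Finset.sum_sub_distrib]
      rw [hQT, hTR]
    rw [htarget, ← hexp]
    exact key

lemma cs_of_psd {M : Type*} [AddCommGroup M] [Module ℂ M] (P : M → M → ℂ)
    (herm : ∀ d e, P e d = conj (P d e))
    (addr : ∀ d e₁ e₂, P d (e₁ + e₂) = P d e₁ + P d e₂)
    (smulr : ∀ (a : ℂ) d e, P d (a • e) = a * P d e)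
    (hpsd : ∀ c, 0 ≤ P c c) (d e : M) :
    ‖P d e‖ ^ 2 ≤ (P d d).re * (P e e).re := by
  have addl : ∀ d₁ d₂ e, P (d₁ + d₂) e = P d₁ e + P d₂ e := by
    intro d₁ d₂ e
    rw [herm, addr, map_add, ← herm, ← herm]
  have smull : ∀ (a : ℂ) d e, P (a • d) e = conj a * P d e := by
    intro a d e
    rw [herm, smulr, map_mul, ← herm]
  have ha : 0 ≤ (P d d).re := (Complex.nonneg_iff.mp (hpsd d)).1
  have hb : 0 ≤ (P e e).re := (Complex.nonneg_iff.mp (hpsd e)).1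
  set p := P d e with hp
  set a := (P d d).re with haa
  set b := (P e e).re with hbb
  have hpc : p * conj p = ((‖p‖ : ℝ) : ℂ) ^ 2 := by
    rw [Complex.mul_conj, Complex.normSq_eq_norm_sq]
    push_cast
    ring
  have hkey : ∀ r : ℝ, 0 ≤ a - 2 * r * ‖p‖ ^ 2
      + r ^ 2 * ‖p‖ ^ 2 * b := by
    intro r
    set tt : ℂ := -(r : ℂ) * conj p with htt
    have e1 : P d (tt • e) = tt * p := by rw [smulr]
    have e2 : P (tt • e) d = conj tt * conj p := by rw [smull, herm d e]
    have e3 : P (tt • e) (tt • e) = tt * conj tt * P e e := by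
      rw [smull, smulr]; ring
    have hexpand : P (d + tt • e) (d + tt • e)
        = P d d + tt * p + conj tt * conj p + tt * conj tt * P e e := by
      rw [addl, addr, addr, e1, e2, e3]; ring
    have hval : P d d + tt * p + conj tt * conj p + tt * conj tt * P e e
        = P d d + ((-(2 * r * ‖p‖ ^ 2) : ℝ) : ℂ)
          + ((r ^ 2 * ‖p‖ ^ 2 : ℝ) : ℂ) * P e e := by
      rw [htt, map_mul, map_neg, Complex.conj_conj, Complex.conj_ofReal]
      push_cast
      linear_combination (-(2:ℂ) * (r:ℂ) + (r:ℂ)^2 * P e e) * hpc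
    have hnn := hpsd (d + tt • e)
    rw [hexpand, hval] at hnn
    have hre := (Complex.nonneg_iff.mp hnn).1
    simp only [Complex.add_re, Complex.ofReal_re, Complex.re_ofReal_mul] at hre
    linarith
  rcases eq_or_lt_of_le (norm_nonneg p) with hp0 | hp0
  · rw [← hp0]
    simpa using mul_nonneg ha hb
  · set q := ‖p‖ ^ 2 with hq
    have hq0 : 0 < q := by positivity
    rcases eq_or_lt_of_le hb with hb0 | hb0
    · exfalso
      have h := hkey ((a + 1) / (2 * q))
      rw [← hb0] at h
      have : (a + 1) / (2 * q) * (2 * q) = a + 1 := by field_simp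
      nlinarith
    · have h := hkey (1 / b)
      have hsimp : a - 2 * (1 / b) * q + (1 / b) ^ 2 * q * b = a - q / b := by
        field_simp
        ring
      rw [hsimp] at h
      have hqb : q / b ≤ a := by linarith
      calc q = q / b * b := by field_simp
        _ ≤ a * b := mul_le_mul_of_nonneg_right hqb hb0.le

lemma inner_lc {F : Type*} [NormedAddCommGroup F] [InnerProductSpace ℂ F]
    (V : S → F) (d e : S →₀ ℂ) :
    (inner ℂ (Finsupp.linearCombination ℂ V d) (Finsupp.linearCombination ℂ V e) : ℂ)
      = Pform (fun s t => (inner ℂ (V s) (V t) : ℂ)) d e := by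
  rw [Finsupp.linearCombination_apply, Finsupp.linearCombination_apply,
    Finsupp.sum, Finsupp.sum, Pform, sum_inner]
  refine Finset.sum_congr rfl fun s _ => ?_
  rw [inner_sum]
  refine Finset.sum_congr rfl fun t _ => ?_
  rw [inner_smul_left, inner_smul_right]
  ring

lemma inner_self_re {F : Type*} [NormedAddCommGroup F] [InnerProductSpace ℂ F] (x : F) :
    (inner ℂ x x : ℂ).re = ‖x‖ ^ 2 := by
  have h : (inner ℂ x x : ℂ) = ((‖x‖ ^ 2 : ℝ) : ℂ) := by
    rw [inner_self_eq_norm_sq_to_K]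
    push_cast
    rfl
  rw [h, Complex.ofReal_re]

lemma inner_self_ofReal {F : Type*} [NormedAddCommGroup F] [InnerProductSpace ℂ F] (x : F) :
    (inner ℂ x x : ℂ) = ((‖x‖ ^ 2 : ℝ) : ℂ) := by
  rw [inner_self_eq_norm_sq_to_K]
  push_cast
  rfl

lemma kernel_recover (K : S → S → ℂ) (s₀ : S)
    (hK : ∀ s t, K t s = conj (K s t)) (hdiag : ∀ s, K s s = 0)
    (hreal : ∀ s, (K s s₀).im = 0) (G : S → S → ℂ)
    (hG : ∀ s t, G s t = 2⁻¹ * (K s t - K s s₀ - K s₀ t)) (s t : S) :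
    K s t = 2 * G s t - G s s - G t t := by
  have h1 : K s₀ t = K t s₀ := by
    rw [hK t s₀, Complex.conj_eq_iff_im.mpr (hreal t)]
  have h2 : K s₀ s = K s s₀ := by
    rw [hK s s₀, Complex.conj_eq_iff_im.mpr (hreal s)]
  rw [hG, hG, hG, hdiag s, hdiag t, h1, h2]
  ring

end CPDAux

set_option maxHeartbeats 1600000 in
/-- Characterization of the order `K' ≤ K` between scalar conditionally positive definite
kernels vanishing on the diagonal, with `K(·,s₀)`, `K'(·,s₀)` real, in terms of a positive
contraction `C` acting on a minimal Kolmogorov decomposition `(V, F)` of `K`. -/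
theorem condPosDef_order_iff_exists_contraction {S : Type*} [Nonempty S] (s₀ : S)
    (K K' : S → S → ℂ)
    (hK : ∀ s t, K t s = (starRingEnd ℂ) (K s t))
    (hK' : ∀ s t, K' t s = (starRingEnd ℂ) (K' s t))
    (hKcpd : IsCondPosDefKernelC K) (hK'cpd : IsCondPosDefKernelC K')
    (hKdiag : ∀ s, K s s = 0) (hK'diag : ∀ s, K' s s = 0)
    (hKreal : ∀ s, (K s s₀).im = 0) (hK'real : ∀ s, (K' s s₀).im = 0)
    {F : Type*} [NormedAddCommGroup F] [InnerProductSpace ℂ F] [CompleteSpace F]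
    (V : S → F)
    (hV : ∀ s t, (inner ℂ (V s) (V t) : ℂ)
      = 2⁻¹ * (K s t - K s s₀ - K s₀ t + K s₀ s₀))
    (hdense : Dense (Submodule.span ℂ (Set.range V) : Set F)) :
    IsCondPosDefKernelC (fun s t => K s t - K' s t) ↔
      ∃ C : F →L[ℂ] F, C.IsPositive ∧ ‖C‖ ≤ 1 ∧
        ∀ s t, K' s t = 2 * (inner ℂ (C (V s)) (C (V t)) : ℂ)
          - (inner ℂ (C (V s)) (C (V s)) : ℂ) - (inner ℂ (C (V t)) (C (V t)) : ℂ) := by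
  classical
  open ComplexConjugate CPDAux in
  have hK00 : K s₀ s₀ = 0 := hKdiag s₀
  have hK'00 : K' s₀ s₀ = 0 := hK'diag s₀
  set L : S → S → ℂ := fun s t => (inner ℂ (V s) (V t) : ℂ) with hLdef
  have hLform : ∀ s t, L s t = 2⁻¹ * (K s t - K s s₀ - K s₀ t) := by
    intro s t
    rw [hLdef]
    simp only [hV s t, hK00, add_zero]
  set L' : S → S → ℂ := fun s t => 2⁻¹ * (K' s t - K' s s₀ - K' s₀ t) with hL'def
  have hKrec : ∀ s t, K s t = 2 * L s t - L s s - L t t :=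
    CPDAux.kernel_recover K s₀ hK hKdiag hKreal L hLform
  have hK'rec : ∀ s t, K' s t = 2 * L' s t - L' s s - L' t t :=
    CPDAux.kernel_recover K' s₀ hK' hK'diag hK'real L' (fun s t => rfl)
  have hLherm : ∀ s t, L t s = conj (L s t) := by
    intro s t
    rw [hLdef]
    exact (inner_conj_symm (𝕜 := ℂ) (V t) (V s)).symm
  have hL'herm : ∀ s t, L' t s = conj (L' s t) := by
    intro s t
    have hc : conj ((2:ℂ)⁻¹) = 2⁻¹ := by
      rw [show ((2:ℂ)⁻¹) = ((2⁻¹ : ℝ) : ℂ) by norm_num, Complex.conj_ofReal]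
    rw [hL'def]
    simp only
    rw [map_mul, map_sub, map_sub, hc, ← hK' s t, ← hK' s s₀, ← hK' s₀ t]
    ring
  constructor
  · -- hard direction
    intro hdiff
    set Φ : (S →₀ ℂ) →ₗ[ℂ] F := Finsupp.linearCombination ℂ V with hΦ
    have hinnerPhi : ∀ d e, (inner ℂ (Φ d) (Φ e) : ℂ) = Pform L d e := by
      intro d e
      exact CPDAux.inner_lc V d e
    have hhalfnn : (0:ℂ) ≤ 2⁻¹ := by
      rw [Complex.nonneg_iff]
      norm_num
    have hP'psd : ∀ c, 0 ≤ Pform L' c c := by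
      intro c
      have hb := CPDAux.bridge K' s₀ hK'00 hK'cpd c
      have heq : Pform L' c c = 2⁻¹ * ∑ s ∈ c.support, ∑ t ∈ c.support,
          conj (c s) * c t * (K' s t - K' s s₀ - K' s₀ t) := by
        rw [Pform]
        simp only [Finset.mul_sum]
        refine Finset.sum_congr rfl fun s _ => Finset.sum_congr rfl fun t _ => ?_
        rw [hL'def]
        ring
      rw [heq]
      exact mul_nonneg hhalfnn hb
    have hdiffpsd : ∀ c, 0 ≤ Pform L c c - Pform L' c c := by
      intro c
      have hb := CPDAux.bridge (fun s t => K s t - K' s t) s₀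
        (by simp [hK00, hK'00]) hdiff c
      have heq : Pform L c c - Pform L' c c = 2⁻¹ * ∑ s ∈ c.support, ∑ t ∈ c.support,
          conj (c s) * c t * ((fun s t => K s t - K' s t) s t
            - (fun s t => K s t - K' s t) s s₀ - (fun s t => K s t - K' s t) s₀ t) := by
        rw [Pform, Pform, ← Finset.sum_sub_distrib]
        simp only [Finset.mul_sum]
        refine Finset.sum_congr rfl fun s _ => ?_
        rw [← Finset.sum_sub_distrib]
        refine Finset.sum_congr rfl fun t _ => ?_
        simp only [hL'def, hLform]
        ring
      rw [heq]
      exact mul_nonneg hhalfnn hb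
    have hdomre : ∀ c, (Pform L' c c).re ≤ ‖Φ c‖ ^ 2 := by
      intro c
      have h1 := (Complex.nonneg_iff.mp (hdiffpsd c)).1
      rw [Complex.sub_re] at h1
      have h2 : (Pform L c c).re = ‖Φ c‖ ^ 2 := by
        rw [← hinnerPhi]
        exact CPDAux.inner_self_re (Φ c)
      linarith
    have hCSa : ∀ d e, ‖Pform L' d e‖ ≤ ‖Φ d‖ * ‖Φ e‖ := by
      intro d e
      have hcs := CPDAux.cs_of_psd (Pform L') (CPDAux.Pform_conj L' hL'herm)
        (CPDAux.Pform_add_right L') (fun a d e => CPDAux.Pform_smul_right L' a d e)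
        hP'psd d e
      have h1 := hdomre d
      have h2 := hdomre e
      have hd0 : 0 ≤ (Pform L' d d).re := (Complex.nonneg_iff.mp (hP'psd d)).1
      have he0 : 0 ≤ (Pform L' e e).re := (Complex.nonneg_iff.mp (hP'psd e)).1
      have hmm : (Pform L' d d).re * (Pform L' e e).re ≤ (‖Φ d‖ * ‖Φ e‖) ^ 2 := by
        have := mul_le_mul h1 h2 he0 (by positivity)
        calc (Pform L' d d).re * (Pform L' e e).re ≤ ‖Φ d‖ ^ 2 * ‖Φ e‖ ^ 2 := this
          _ = (‖Φ d‖ * ‖Φ e‖) ^ 2 := by ring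
      nlinarith [norm_nonneg (Pform L' d e),
        mul_nonneg (norm_nonneg (Φ d)) (norm_nonneg (Φ e))]
    set G : Submodule ℂ F := LinearMap.range Φ with hGdef
    have hGspan : G = Submodule.span ℂ (Set.range V) := by
      rw [hGdef, hΦ]
      exact Finsupp.range_linearCombination ℂ
    have hdG : Dense (G : Set F) := by
      rw [hGspan]
      exact hdense
    have hmem : ∀ e : S →₀ ℂ, Φ e ∈ G := fun e => LinearMap.mem_range_self Φ e
    set llin : (S →₀ ℂ) → ((S →₀ ℂ) →ₗ[ℂ] ℂ) := fun d =>
      Finsupp.linearCombination ℂ (fun t => ∑ u ∈ d.support, conj (d u) * L' u t)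
      with hllin
    have hllin_apply : ∀ d e, llin d e = Pform L' d e := by
      intro d e
      rw [hllin]
      exact (CPDAux.Pform_eq_lc L' d e).symm
    have hPker : ∀ d e, Φ e = 0 → Pform L' d e = 0 := by
      intro d e he
      have h := hCSa d e
      rw [he, norm_zero, mul_zero] at h
      exact norm_eq_zero.mp (le_antisymm h (norm_nonneg _))
    have hkerle : ∀ d, LinearMap.ker Φ ≤ LinearMap.ker (llin d) := by
      intro d e he
      rw [LinearMap.mem_ker] at he ⊢
      rw [hllin_apply]
      exact hPker d e he
    set gbar : (S →₀ ℂ) → (G →ₗ[ℂ] ℂ) := fun d =>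
      (Submodule.liftQ (LinearMap.ker Φ) (llin d) (hkerle d)).comp
        ((LinearMap.quotKerEquivRange Φ).symm.toLinearMap) with hgbar
    have hquot : ∀ e : S →₀ ℂ, (LinearMap.quotKerEquivRange Φ).symm ⟨Φ e, hmem e⟩
        = Submodule.Quotient.mk e := by
      intro e
      rw [LinearEquiv.symm_apply_eq]
      exact Subtype.ext (LinearMap.quotKerEquivRange_apply_mk (f := Φ) (x := e)).symm
    have hgbar_apply : ∀ d e, gbar d ⟨Φ e, hmem e⟩ = Pform L' d e := by
      intro d e
      rw [hgbar]
      simp only [LinearMap.comp_apply, LinearEquiv.coe_toLinearMap]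
      rw [hquot, Submodule.liftQ_apply, hllin_apply]
    have hgbar_bound : ∀ d (y : G), ‖gbar d y‖ ≤ ‖Φ d‖ * ‖y‖ := by
      intro d y
      obtain ⟨e, he⟩ := LinearMap.mem_range.mp y.2
      have hy : y = ⟨Φ e, hmem e⟩ := Subtype.ext he.symm
      rw [hy, hgbar_apply]
      have hny : ‖(⟨Φ e, hmem e⟩ : G)‖ = ‖Φ e‖ := rfl
      rw [hny]
      exact hCSa d e
    set gc : (S →₀ ℂ) → (G →L[ℂ] ℂ) := fun d =>
      LinearMap.mkContinuous (gbar d) ‖Φ d‖ (hgbar_bound d) with hgc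
    have hgc_norm : ∀ d, ‖gc d‖ ≤ ‖Φ d‖ := fun d =>
      LinearMap.mkContinuous_norm_le _ (norm_nonneg _) _
    have hHB : ∀ d : S →₀ ℂ, ∃ g : F →L[ℂ] ℂ, (∀ y : G, g y = gc d y) ∧ ‖g‖ = ‖gc d‖ :=
      fun d => exists_extension_norm_eq G (gc d)
    set Λ : (S →₀ ℂ) → (F →L[ℂ] ℂ) := fun d => (hHB d).choose with hΛ
    have hΛ_spec : ∀ d (y : G), Λ d y = gc d y := fun d => (hHB d).choose_spec.1
    have hΛ_norm : ∀ d, ‖Λ d‖ = ‖gc d‖ := fun d => (hHB d).choose_spec.2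
    set gfun : (S →₀ ℂ) → F := fun d => (InnerProductSpace.toDual ℂ F).symm (Λ d)
      with hgfun
    have hgfun_inner : ∀ d e, (inner ℂ (gfun d) (Φ e) : ℂ) = Pform L' d e := by
      intro d e
      rw [hgfun]
      simp only
      rw [InnerProductSpace.toDual_symm_apply]
      have h1 : Λ d (Φ e) = Λ d ((⟨Φ e, hmem e⟩ : G) : F) := rfl
      rw [h1, hΛ_spec d ⟨Φ e, hmem e⟩, hgc]
      simp only [LinearMap.mkContinuous_apply]
      exact hgbar_apply d e
    have hgfun_norm : ∀ d, ‖gfun d‖ ≤ ‖Φ d‖ := by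
      intro d
      rw [hgfun]
      simp only
      rw [LinearIsometryEquiv.norm_map, hΛ_norm]
      exact hgc_norm d
    have hext0 : ∀ z : F, (∀ e : S →₀ ℂ, (inner ℂ z (Φ e) : ℂ) = 0) → z = 0 := by
      intro z hz
      have hcont : Continuous fun y : F => (inner ℂ z y : ℂ) :=
        continuous_const.inner continuous_id
      have heq : (fun y : F => (inner ℂ z y : ℂ)) = fun _ => (0:ℂ) := by
        refine Continuous.ext_on hdG hcont continuous_const ?_
        intro y hy
        obtain ⟨e, he⟩ := LinearMap.mem_range.mp hy
        rw [← he]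
        exact hz e
      have h0 := congrFun heq z
      exact inner_self_eq_zero.mp h0
    set T₀ : (S →₀ ℂ) →ₗ[ℂ] F :=
      { toFun := gfun
        map_add' := by
          intro d₁ d₂
          have hz : ∀ e, (inner ℂ (gfun (d₁ + d₂) - (gfun d₁ + gfun d₂)) (Φ e) : ℂ) = 0 := by
            intro e
            rw [inner_sub_left, inner_add_left, hgfun_inner, hgfun_inner, hgfun_inner,
              CPDAux.Pform_add_left L' hL'herm]
            ring
          have h0 := hext0 _ hz
          rw [sub_eq_zero] at h0
          exact h0
        map_smul' := by
          intro a d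
          simp only [RingHom.id_apply]
          have hz : ∀ e, (inner ℂ (gfun (a • d) - a • gfun d) (Φ e) : ℂ) = 0 := by
            intro e
            rw [inner_sub_left, inner_smul_left, hgfun_inner, hgfun_inner,
              CPDAux.Pform_smul_left L' hL'herm]
            ring
          have h0 := hext0 _ hz
          rw [sub_eq_zero] at h0
          exact h0 } with hT₀
    have hT₀_apply : ∀ d, T₀ d = gfun d := fun d => rfl
    have hT₀ker : LinearMap.ker Φ ≤ LinearMap.ker T₀ := by
      intro d hd
      rw [LinearMap.mem_ker] at hd ⊢
      rw [hT₀_apply]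
      have h := hgfun_norm d
      rw [hd, norm_zero] at h
      exact norm_le_zero_iff.mp h
    set Tbar : G →ₗ[ℂ] F :=
      (Submodule.liftQ (LinearMap.ker Φ) T₀ hT₀ker).comp
        ((LinearMap.quotKerEquivRange Φ).symm.toLinearMap) with hTbar
    have hTbar_apply : ∀ e, Tbar ⟨Φ e, hmem e⟩ = gfun e := by
      intro e
      rw [hTbar]
      simp only [LinearMap.comp_apply, LinearEquiv.coe_toLinearMap]
      rw [hquot, Submodule.liftQ_apply]
      exact hT₀_apply e
    have hTbar_bound : ∀ y : G, ‖Tbar y‖ ≤ 1 * ‖y‖ := by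
      intro y
      obtain ⟨e, he⟩ := LinearMap.mem_range.mp y.2
      have hy : y = ⟨Φ e, hmem e⟩ := Subtype.ext he.symm
      rw [hy, hTbar_apply, one_mul]
      exact hgfun_norm e
    set TbarL : G →L[ℂ] F := LinearMap.mkContinuous Tbar 1 hTbar_bound with hTbarL
    have hTbarL_norm : ‖TbarL‖ ≤ 1 := LinearMap.mkContinuous_norm_le _ zero_le_one _
    have hsub_bound : ∀ y : G, ‖y‖ ≤ (1:NNReal) * ‖(G.subtypeL) y‖ := by
      intro y
      simp
    have hdr : DenseRange (G.subtypeL) := by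
      have hr : Set.range (G.subtypeL) = (G : Set F) := by
        ext y
        constructor
        · rintro ⟨z, rfl⟩
          exact z.2
        · intro hy
          exact ⟨⟨y, hy⟩, rfl⟩
      unfold DenseRange
      rw [hr]
      exact hdG
    set T : F →L[ℂ] F := TbarL.extend G.subtypeL
      with hTdef
    have hT_norm : ‖T‖ ≤ 1 := by
      have h := ContinuousLinearMap.opNorm_extend_le (f := TbarL) (e := G.subtypeL)
        (h_dense := hdr) (h_e := hsub_bound)
      calc ‖T‖ ≤ (1:NNReal) * ‖TbarL‖ := h
        _ ≤ 1 := by simpa using hTbarL_norm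
    have hTPhi : ∀ e, T (Φ e) = gfun e := by
      intro e
      have h1 : T (G.subtypeL ⟨Φ e, hmem e⟩) = TbarL ⟨Φ e, hmem e⟩ :=
        ContinuousLinearMap.extend_eq _ hdr
          (ContinuousLinearMap.isUniformEmbedding_of_bound _ hsub_bound).isUniformInducing _
      have h2 : G.subtypeL (⟨Φ e, hmem e⟩ : G) = Φ e := rfl
      rw [h2] at h1
      rw [h1]
      exact hTbar_apply e
    have hTinner : ∀ d e, (inner ℂ (Φ d) (T (Φ e)) : ℂ) = Pform L' d e := by
      intro d e
      rw [hTPhi]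
      calc (inner ℂ (Φ d) (gfun e) : ℂ)
          = conj (inner ℂ (gfun e) (Φ d) : ℂ) := (inner_conj_symm _ _).symm
        _ = conj (Pform L' e d) := by rw [hgfun_inner]
        _ = Pform L' d e := by
            rw [CPDAux.Pform_conj L' hL'herm d e, Complex.conj_conj]
    have hsym : ∀ x y : F, (inner ℂ (T x) y : ℂ) = inner ℂ x (T y) := by
      have hc1 : Continuous fun p : F × F => (inner ℂ (T p.1) p.2 : ℂ) :=
        (T.continuous.comp continuous_fst).inner continuous_snd
      have hc2 : Continuous fun p : F × F => (inner ℂ p.1 (T p.2) : ℂ) :=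
        continuous_fst.inner (T.continuous.comp continuous_snd)
      have hdp : Dense ((G : Set F) ×ˢ (G : Set F)) := hdG.prod hdG
      have heq := Continuous.ext_on hdp hc1 hc2 ?_
      · intro x y
        exact congrFun heq (x, y)
      · rintro ⟨x, y⟩ ⟨hx, hy⟩
        obtain ⟨d, rfl⟩ := LinearMap.mem_range.mp hx
        obtain ⟨e, rfl⟩ := LinearMap.mem_range.mp hy
        show (inner ℂ (T (Φ d)) (Φ e) : ℂ) = inner ℂ (Φ d) (T (Φ e))
        calc (inner ℂ (T (Φ d)) (Φ e) : ℂ)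
            = (inner ℂ (gfun d) (Φ e) : ℂ) := by rw [hTPhi]
          _ = Pform L' d e := hgfun_inner d e
          _ = inner ℂ (Φ d) (T (Φ e)) := (hTinner d e).symm
    have hsa : IsSelfAdjoint T :=
      ContinuousLinearMap.isSelfAdjoint_iff_isSymmetric.mpr fun x y => hsym x y
    have hTpos : T.IsPositive := by
      refine ContinuousLinearMap.isPositive_def'.mpr ⟨hsa, ?_⟩
      have hcont : Continuous fun x : F => T.reApplyInnerSelf x :=
        T.reApplyInnerSelf_continuous
      have hclosed : IsClosed {x : F | 0 ≤ T.reApplyInnerSelf x} :=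
        isClosed_le continuous_const hcont
      have hsubset : (G : Set F) ⊆ {x : F | 0 ≤ T.reApplyInnerSelf x} := by
        intro x hx
        obtain ⟨d, rfl⟩ := LinearMap.mem_range.mp hx
        show 0 ≤ T.reApplyInnerSelf (Φ d)
        have h1 : T.reApplyInnerSelf (Φ d) = RCLike.re (inner ℂ (T (Φ d)) (Φ d) : ℂ) := rfl
        rw [h1, hsym, hTinner]
        have := (Complex.nonneg_iff.mp (hP'psd d)).1
        simpa [RCLike.re_to_complex] using this
      intro x
      have hx : x ∈ closure (G : Set F) := by
        rw [hdG.closure_eq]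
        trivial
      exact (closure_minimal hsubset hclosed) hx
    have hT0 : (0 : F →L[ℂ] F) ≤ T :=
      (ContinuousLinearMap.nonneg_iff_isPositive T).mpr hTpos
    clear_value T
    set Csq : F →L[ℂ] F := CFC.sqrt T with hCsqdef
    have hCnn : (0 : F →L[ℂ] F) ≤ Csq := CFC.sqrt_nonneg T
    have hCsa : IsSelfAdjoint Csq := IsSelfAdjoint.of_nonneg hCnn
    have hCsq2 : Csq ^ 2 = T := CFC.sq_sqrt T hT0
    have hCnorm : ‖Csq‖ ≤ 1 := by
      have h1 : ‖Csq‖ * ‖Csq‖ = ‖T‖ := by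
        rw [← CStarRing.norm_star_mul_self (x := Csq), hCsa.star_eq, ← sq, hCsq2]
      nlinarith [norm_nonneg Csq, hT_norm]
    have hCinner : ∀ x y : F, (inner ℂ (Csq x) (Csq y) : ℂ) = inner ℂ x (T y) := by
      intro x y
      rw [← ContinuousLinearMap.adjoint_inner_right Csq x (Csq y)]
      congr 1
      rw [ContinuousLinearMap.isSelfAdjoint_iff'.mp hCsa]
      show (Csq * Csq) y = T y
      rw [← sq, hCsq2]
    refine ⟨Csq, (ContinuousLinearMap.nonneg_iff_isPositive Csq).mp hCnn, hCnorm, ?_⟩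
    intro u w
    have hsingle : ∀ v : S, Φ (Finsupp.single v 1) = V v := by
      intro v
      rw [hΦ]
      simp
    have hCV : ∀ v v' : S, (inner ℂ (Csq (V v)) (Csq (V v')) : ℂ) = L' v v' := by
      intro v v'
      rw [hCinner, ← hsingle v, ← hsingle v', hTinner, CPDAux.Pform_single]
    rw [hCV u w, hCV u u, hCV w w]
    exact hK'rec u w
  · -- easy direction
    rintro ⟨C, hCpos, hCnorm, hCform⟩
    intro n hn s c hsum
    simp only
    set x := ∑ i, c i • V (s i) with hx
    have hconjsum : ∑ i, conj (c i) = 0 := by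
      rw [← map_sum, hsum, map_zero]
    have hz1 : ∀ h : Fin n → ℂ, (∑ i, ∑ j, conj (c i) * c j * h i) = 0 := by
      intro h
      have hstep : ∀ i, (∑ j, conj (c i) * c j * h i) = conj (c i) * h i * ∑ j, c j := by
        intro i
        rw [Finset.mul_sum]
        exact Finset.sum_congr rfl fun j _ => by ring
      rw [Finset.sum_congr rfl fun i _ => hstep i]
      simp [hsum]
    have hz2 : ∀ h : Fin n → ℂ, (∑ i, ∑ j, conj (c i) * c j * h j) = 0 := by
      intro h
      have hstep : ∀ i, (∑ j, conj (c i) * c j * h j) = conj (c i) * ∑ j, c j * h j := by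
        intro i
        rw [Finset.mul_sum]
        exact Finset.sum_congr rfl fun j _ => by ring
      rw [Finset.sum_congr rfl fun i _ => hstep i, ← Finset.sum_mul, hconjsum, zero_mul]
    have hxinner : (inner ℂ x x : ℂ) = ∑ i, ∑ j, conj (c i) * c j * L (s i) (s j) := by
      rw [hx, sum_inner]
      refine Finset.sum_congr rfl fun i _ => ?_
      rw [inner_sum]
      refine Finset.sum_congr rfl fun j _ => ?_
      rw [inner_smul_left, inner_smul_right]
      rw [hLdef]
      ring
    have hCx : C x = ∑ i, c i • C (V (s i)) := by
      rw [hx, map_sum]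
      exact Finset.sum_congr rfl fun i _ => by rw [map_smul]
    have hCxinner : (inner ℂ (C x) (C x) : ℂ)
        = ∑ i, ∑ j, conj (c i) * c j * (inner ℂ (C (V (s i))) (C (V (s j))) : ℂ) := by
      rw [hCx, sum_inner]
      refine Finset.sum_congr rfl fun i _ => ?_
      rw [inner_sum]
      refine Finset.sum_congr rfl fun j _ => ?_
      rw [inner_smul_left, inner_smul_right]
      ring
    have hsplit : (∑ i, ∑ j, conj (c i) * c j * (K (s i) (s j) - K' (s i) (s j)))
        = 2 * (inner ℂ x x : ℂ) - 2 * (inner ℂ (C x) (C x) : ℂ) := by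
      have hterm : ∀ i j, conj (c i) * c j * (K (s i) (s j) - K' (s i) (s j))
          = 2 * (conj (c i) * c j * L (s i) (s j))
            - conj (c i) * c j * (L (s i) (s i)) - conj (c i) * c j * (L (s j) (s j))
            - 2 * (conj (c i) * c j * (inner ℂ (C (V (s i))) (C (V (s j))) : ℂ))
            + conj (c i) * c j * ((inner ℂ (C (V (s i))) (C (V (s i))) : ℂ))
            + conj (c i) * c j * ((inner ℂ (C (V (s j))) (C (V (s j))) : ℂ)) := by
        intro i j
        rw [hKrec (s i) (s j), hCform (s i) (s j)]
        ring
      calc (∑ i, ∑ j, conj (c i) * c j * (K (s i) (s j) - K' (s i) (s j)))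
          = ∑ i, ∑ j, (2 * (conj (c i) * c j * L (s i) (s j))
            - conj (c i) * c j * (L (s i) (s i)) - conj (c i) * c j * (L (s j) (s j))
            - 2 * (conj (c i) * c j * (inner ℂ (C (V (s i))) (C (V (s j))) : ℂ))
            + conj (c i) * c j * ((inner ℂ (C (V (s i))) (C (V (s i))) : ℂ))
            + conj (c i) * c j * ((inner ℂ (C (V (s j))) (C (V (s j))) : ℂ))) := by
            exact Finset.sum_congr rfl fun i _ => Finset.sum_congr rfl fun j _ => hterm i j
        _ = 2 * (inner ℂ x x : ℂ) - 2 * (inner ℂ (C x) (C x) : ℂ) := by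
            simp only [Finset.sum_add_distrib, Finset.sum_sub_distrib, ← Finset.mul_sum]
            rw [hz1 (fun i => L (s i) (s i)), hz2 (fun j => L (s j) (s j)),
              hz1 (fun i => (inner ℂ (C (V (s i))) (C (V (s i))) : ℂ)),
              hz2 (fun j => (inner ℂ (C (V (s j))) (C (V (s j))) : ℂ)),
              ← hxinner, ← hCxinner]
            ring
    rw [hsplit]
    have hCxle : ‖C x‖ ≤ ‖x‖ := by
      calc ‖C x‖ ≤ ‖C‖ * ‖x‖ := C.le_opNorm x
        _ ≤ 1 * ‖x‖ := mul_le_mul_of_nonneg_right hCnorm (norm_nonneg x)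
        _ = ‖x‖ := one_mul _
    rw [CPDAux.inner_self_ofReal x, CPDAux.inner_self_ofReal (C x)]
    have hfin : (2 * ((‖x‖ ^ 2 : ℝ) : ℂ) - 2 * ((‖C x‖ ^ 2 : ℝ) : ℂ))
        = (((2 * ‖x‖ ^ 2 - 2 * ‖C x‖ ^ 2 : ℝ)) : ℂ) := by
      push_cast
      ring
    rw [hfin]
    rw [Complex.zero_le_real]
    have := pow_le_pow_left₀ (norm_nonneg (C x)) hCxle 2
    linarith
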